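/- Fix an arbitrary infinite reference strand R over {A,C,G,T} containing infinitely many occurrences of each character, and let S be a uniformly random string in {A,C,G,T}^n. Let cost_R(S) be the index of the last character of R used when greedily printing S along R. Then cost_R(S) stochastically dominates the sum of n i.i.d. random variables each uniform on {1,2,3,4}; in particular E[cost_R(S)] ≥ 2.5n. -/

import Mathlib

open Finset
open scoped Classical

noncomputable def refCost (R : ℕ → Fin 4) (S : List (Fin 4)) : ℕ :=
  sInf {m | S.Sublist ((List.range m).map R)}

section Aux

variable (R : ℕ → Fin 4)

/-- first index `≥ p` where `R` equals `c` -/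
noncomputable def nxt (p : ℕ) (c : Fin 4) : ℕ := sInf {i | p ≤ i ∧ R i = c}

/-- greedy end position -/
noncomputable def gpos : ℕ → List (Fin 4) → ℕ
  | p, [] => p
  | p, c :: S => gpos (nxt R p c + 1) S

/-- sorting permutation of the four waiting times at position `p` -/
noncomputable def sortp (p : ℕ) : Equiv.Perm (Fin 4) :=
  Tuple.sort (fun c => nxt R p c)

/-- decode a tuple of "ranks" into a strand -/
noncomputable def dec : ℕ → List (Fin 4) → List (Fin 4)
  | _, [] => []
  | p, y :: ys => sortp R p y :: dec (nxt R p (sortp R p y) + 1) ys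

variable {R}
variable (hR : ∀ c : Fin 4, {i : ℕ | R i = c}.Infinite)
include hR

lemma nxt_spec (p : ℕ) (c : Fin 4) : p ≤ nxt R p c ∧ R (nxt R p c) = c := by
  have hne : {i | p ≤ i ∧ R i = c}.Nonempty := by
    obtain ⟨b, hb, hab⟩ := (hR c).exists_gt p
    exact ⟨b, le_of_lt hab, hb⟩
  exact Nat.sInf_mem hne

lemma nxt_mono {p q : ℕ} (h : p ≤ q) (c : Fin 4) : nxt R p c ≤ nxt R q c :=
  Nat.sInf_le ⟨le_trans h (nxt_spec hR q c).1, (nxt_spec hR q c).2⟩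

lemma gpos_mono : ∀ (S : List (Fin 4)) {p q : ℕ}, p ≤ q → gpos R p S ≤ gpos R q S := by
  intro S
  induction S with
  | nil => intro p q h; exact h
  | cons c S ih =>
      intro p q h
      exact ih (Nat.succ_le_succ (nxt_mono hR h c))

lemma le_gpos : ∀ (S : List (Fin 4)) (p : ℕ), p ≤ gpos R p S := by
  intro S
  induction S with
  | nil => intro p; exact le_rfl
  | cons c S ih =>
      intro p
      have h1 : p ≤ nxt R p c + 1 := le_trans (nxt_spec hR p c).1 (Nat.le_succ _)
      exact le_trans h1 (ih _)

lemma gpos_le_of_sublist :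
    ∀ (k : ℕ) (S : List (Fin 4)) (p : ℕ),
      S.Sublist ((List.range' p k).map R) → gpos R p S ≤ p + k := by
  intro k
  induction k with
  | zero =>
      intro S p h
      simp only [List.range'_zero, List.map_nil, List.sublist_nil] at h
      subst h; simp [gpos]
  | succ k ih =>
      intro S p h
      rw [List.range'_succ, List.map_cons] at h
      cases S with
      | nil => simp only [gpos]; omega
      | cons c S' =>
          cases h with
          | cons _ h' =>
              have h2 := ih (c :: S') (p + 1) h'
              have h3 : gpos R p (c :: S') ≤ gpos R (p + 1) (c :: S') :=
                gpos_mono hR _ (Nat.le_succ p)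
              omega
          | cons_cons _ h' =>
              have hnle : nxt R p (R p) ≤ p := Nat.sInf_le ⟨le_rfl, rfl⟩
              have h2 := ih S' (p + 1) h'
              have h3 : gpos R p (R p :: S') = gpos R (nxt R p (R p) + 1) S' := rfl
              have h4 : gpos R (nxt R p (R p) + 1) S' ≤ gpos R (p + 1) S' :=
                gpos_mono hR _ (by omega)
              omega

lemma sublist_gpos :
    ∀ (S : List (Fin 4)) (p : ℕ),
      S.Sublist ((List.range' p (gpos R p S - p)).map R) := by
  intro S
  induction S with
  | nil => intro p; exact List.nil_sublist _
  | cons c S' ih =>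
      intro p
      set q := nxt R p c with hq
      have hq1 : p ≤ q := (nxt_spec hR p c).1
      have hq2 : R q = c := (nxt_spec hR p c).2
      have hm : gpos R p (c :: S') = gpos R (q + 1) S' := rfl
      set m := gpos R (q + 1) S' with hmdef
      have hqm : q + 1 ≤ m := le_gpos hR S' (q + 1)
      have hsplit : List.range' p (m - p) =
          List.range' p (q + 1 - p) ++ List.range' (q + 1) (m - (q + 1)) := by
        have := List.range'_append (s := p) (m := q + 1 - p) (n := m - (q + 1)) (step := 1)
        rw [show p + 1 * (q + 1 - p) = q + 1 by omega] at this
        rw [show (q + 1 - p) + (m - (q + 1)) = m - p by omega] at this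
        exact this.symm
      rw [hm, hsplit, List.map_append]
      have h1 : [c].Sublist ((List.range' p (q + 1 - p)).map R) := by
        rw [List.singleton_sublist]
        have : q ∈ List.range' p (q + 1 - p) := by
          rw [List.mem_range'_1]
          omega
        exact hq2 ▸ List.mem_map_of_mem (f := R) this
      have h2 := ih (q + 1)
      simpa using List.Sublist.append h1 h2

lemma gpos_le_refCost (S : List (Fin 4)) : gpos R 0 S ≤ refCost R S := by
  have h1 := sublist_gpos hR S 0
  rw [Nat.sub_zero] at h1
  have h1' : S.Sublist ((List.range (gpos R 0 S)).map R) := by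
    rwa [List.range_eq_range']
  have hne : {m | S.Sublist ((List.range m).map R)}.Nonempty := ⟨_, h1'⟩
  have hmem := Nat.sInf_mem hne
  have : S.Sublist ((List.range' 0 (refCost R S)).map R) := by
    rwa [← List.range_eq_range']
  have := gpos_le_of_sublist hR (refCost R S) S 0 this
  omega

omit hR in
lemma strictMono_ge {m : ℕ} (g : Fin (m + 1) → ℕ) (hg : StrictMono g) :
    ∀ y : Fin (m + 1), g 0 + y.val ≤ g y := by
  intro y
  induction y using Fin.induction with
  | zero => simp
  | succ i ihi =>
      have h1 := hg (Fin.castSucc_lt_succ (i := i))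
      simp only [Fin.coe_castSucc] at ihi
      simp only [Fin.val_succ]
      omega

lemma sortp_ge (p : ℕ) (y : Fin 4) : p + y.val ≤ nxt R p (sortp R p y) := by
  set f := fun c => nxt R p c with hf
  have hfinj : Function.Injective f := by
    intro c c' h
    have h1 := (nxt_spec hR p c).2
    have h2 := (nxt_spec hR p c').2
    have h3 : R (nxt R p c) = R (nxt R p c') := congrArg R h
    rw [h1, h2] at h3
    exact h3
  have hmono : Monotone (f ∘ Tuple.sort f) := Tuple.monotone_sort f
  have hginj : Function.Injective (f ∘ Tuple.sort f) :=
    hfinj.comp (Tuple.sort f).injective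
  have hsm : StrictMono (f ∘ Tuple.sort f) := hmono.strictMono_of_injective hginj
  have h0 : p ≤ (f ∘ Tuple.sort f) 0 := (nxt_spec hR p _).1
  have := strictMono_ge (f ∘ Tuple.sort f) hsm y
  have : p + y.val ≤ (f ∘ Tuple.sort f) y := by omega
  exact this

variable (R)

omit hR in
lemma dec_length : ∀ (ys : List (Fin 4)) (p : ℕ), (dec R p ys).length = ys.length := by
  intro ys
  induction ys with
  | nil => intro p; rfl
  | cons y ys ih => intro p; simp [dec, ih]

omit hR in
lemma dec_inj : ∀ (ys ys' : List (Fin 4)) (p : ℕ), dec R p ys = dec R p ys' → ys = ys' := by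
  intro ys
  induction ys with
  | nil =>
      intro ys' p h
      cases ys' with
      | nil => rfl
      | cons y' ys' => simp [dec] at h
  | cons y ys ih =>
      intro ys' p h
      cases ys' with
      | nil => simp [dec] at h
      | cons y' ys' =>
          simp only [dec, List.cons.injEq] at h
          have hy : y = y' := (sortp R p).injective h.1
          subst hy
          exact congrArg (y :: ·) (ih ys' _ h.2)

variable {R}

lemma gpos_dec_ge :
    ∀ (ys : List (Fin 4)) (p : ℕ),
      p + (ys.map (fun v : Fin 4 => v.val + 1)).sum ≤ gpos R p (dec R p ys) := by
  intro ys
  induction ys with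
  | nil => intro p; simp [dec, gpos]
  | cons y ys ih =>
      intro p
      have h1 : p + y.val + 1 ≤ nxt R p (sortp R p y) + 1 := by
        have := sortp_ge hR p y
        omega
      have h2 : gpos R p (dec R p (y :: ys)) =
          gpos R (nxt R p (sortp R p y) + 1) (dec R (nxt R p (sortp R p y) + 1) ys) := rfl
      have h3 := ih (nxt R p (sortp R p y) + 1)
      rw [h2]
      simp only [List.map_cons, List.sum_cons]
      omega

omit hR in
lemma sum_y_aux : ∀ n : ℕ, 2 * ∑ y : Fin n → Fin 4, ∑ i, ((y i : ℕ) + 1) = 5 * n * 4 ^ n := by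
  intro n
  induction n with
  | zero => simp
  | succ n ih =>
      have hcomp := Equiv.sum_comp (Fin.consEquiv (fun _ : Fin (n + 1) => Fin 4))
        (fun y : Fin (n + 1) → Fin 4 => ∑ i, ((y i : ℕ) + 1))
      rw [← hcomp, Fintype.sum_prod_type]
      have hinner : ∀ (v : Fin 4) (r : Fin n → Fin 4),
          (∑ i : Fin (n + 1),
            (((Fin.consEquiv (fun _ : Fin (n + 1) => Fin 4)) (v, r) i : ℕ) + 1)) =
            ((v : ℕ) + 1) + ∑ i : Fin n, ((r i : ℕ) + 1) := by
        intro v r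
        rw [Fin.sum_univ_succ]
        simp [Fin.consEquiv, Fin.cons_zero, Fin.cons_succ]
      simp_rw [hinner]
      have hA : ∀ v : Fin 4,
          (∑ r : Fin n → Fin 4, (((v : ℕ) + 1) + ∑ i, ((r i : ℕ) + 1))) =
            4 ^ n * ((v : ℕ) + 1) + ∑ r : Fin n → Fin 4, ∑ i, ((r i : ℕ) + 1) := by
        intro v
        rw [Finset.sum_add_distrib, Finset.sum_const, Finset.card_univ]
        simp [smul_eq_mul, mul_comm]
      simp_rw [hA]
      rw [Finset.sum_add_distrib, Finset.sum_const, Finset.card_univ, Fintype.card_fin]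
      have hs4 : (∑ v : Fin 4, ((v : ℕ) + 1)) = 10 := by decide
      have h10 : (∑ v : Fin 4, 4 ^ n * ((v : ℕ) + 1)) = 4 ^ n * 10 := by
        rw [← Finset.mul_sum, hs4]
      rw [h10, pow_succ, smul_eq_mul]
      linear_combination 4 * ih

end Aux

/-- For any infinite reference strand R containing each character infinitely
often, the cost of a uniformly random strand in {A,C,G,T}^n stochastically
dominates a sum of n i.i.d. uniforms on {1,2,3,4} (expressed by counting over
the uniform sample space), and in particular E[cost] ≥ 2.5n. -/
theorem stmt10 (n : ℕ) (R : ℕ → Fin 4) (hR : ∀ c : Fin 4, {i : ℕ | R i = c}.Infinite) :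
    (∀ t : ℕ,
      (Finset.univ.filter
        (fun y : Fin n → Fin 4 => t ≤ ∑ i, ((y i : ℕ) + 1))).card
      ≤ (Finset.univ.filter
        (fun S : Fin n → Fin 4 => t ≤ refCost R (List.ofFn S))).card) ∧
    5 * n * 4 ^ n ≤ 2 * ∑ S : Fin n → Fin 4, refCost R (List.ofFn S) := by
  set Φ : (Fin n → Fin 4) → (Fin n → Fin 4) := fun y i =>
    (dec R 0 (List.ofFn y)).get ⟨i.val, by rw [dec_length, List.length_ofFn]; exact i.isLt⟩
    with hΦ
  have hofFn : ∀ y : Fin n → Fin 4, List.ofFn (Φ y) = dec R 0 (List.ofFn y) := by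
    intro y
    apply List.ext_get
    · simp [dec_length, List.length_ofFn]
    · intro i h1 h2
      simp [hΦ, List.get_ofFn]
  have hΦinj : Function.Injective Φ := by
    intro y y' h
    have h2 : List.ofFn (Φ y) = List.ofFn (Φ y') := congrArg _ h
    rw [hofFn, hofFn] at h2
    exact List.ofFn_injective (dec_inj R _ _ 0 h2)
  have hsum : ∀ y : Fin n → Fin 4, (∑ i, ((y i : ℕ) + 1)) ≤ refCost R (List.ofFn (Φ y)) := by
    intro y
    rw [hofFn]
    have h1 : (∑ i, ((y i : ℕ) + 1)) =
        ((List.ofFn y).map (fun v : Fin 4 => v.val + 1)).sum := by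
      rw [List.map_ofFn]
      exact List.sum_ofFn.symm
    have h2 := gpos_dec_ge hR (List.ofFn y) 0
    have h3 := gpos_le_refCost hR (dec R 0 (List.ofFn y))
    omega
  constructor
  · intro t
    apply Finset.card_le_card_of_injOn Φ
    · intro y hy
      simp only [Finset.coe_filter, Finset.mem_coe, Finset.mem_filter, Finset.mem_univ, true_and, Set.mem_setOf_eq] at hy ⊢
      exact le_trans hy (hsum y)
    · exact hΦinj.injOn
  · have hbij : Function.Bijective Φ := Finite.injective_iff_bijective.mp hΦinj
    have hcomp := hbij.sum_comp (fun S : Fin n → Fin 4 => refCost R (List.ofFn S))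
    rw [← hcomp]
    have h1 : (∑ y : Fin n → Fin 4, ∑ i, ((y i : ℕ) + 1)) ≤
        ∑ y : Fin n → Fin 4, refCost R (List.ofFn (Φ y)) :=
      Finset.sum_le_sum fun y _ => hsum y
    have h2 := sum_y_aux n
    linarith
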